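/- (Main Theorem, second part.) Assume ε ∈ EuclideanSpace ℝ (Fin n) has εᵢ ∈ {−1,1} for all i and C.mulVec ε = 0. Let ρ > 0 and let μ be the uniform probability measure on the sphere {y ∈ EuclideanSpace ℝ (Fin n) : ‖y‖ = ρ}. Then for every k and every index sequence j : Fin k → Fin n, ∫ ‖y_k(j, y₀)‖² dμ(y₀) ≥ ρ²/n. In particular, if the initial vector is chosen uniformly at random from a sphere of radius ρ centered at the origin, then the expected squared norm of every iterate is at least ρ²/n. -/

import Mathlib

open scoped RealInnerProductSpace

/-- The `j`-th row of `C` as a vector in Euclidean space. -/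
noncomputable def row {n : ℕ} (C : Matrix (Fin n) (Fin n) ℝ) (j : Fin n) :
    EuclideanSpace ℝ (Fin n) := (WithLp.equiv 2 (Fin n → ℝ)).symm (C j)

/-- Matrix-vector multiplication, landing in Euclidean space. -/
noncomputable def mulVecE {n : ℕ} (C : Matrix (Fin n) (Fin n) ℝ)
    (v : EuclideanSpace ℝ (Fin n)) : EuclideanSpace ℝ (Fin n) :=
  (WithLp.equiv 2 (Fin n → ℝ)).symm (C.mulVec ((WithLp.equiv 2 (Fin n → ℝ)) v))

/-- Squared Frobenius norm. -/
noncomputable def frobSq {n : ℕ} (C : Matrix (Fin n) (Fin n) ℝ) : ℝ :=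
  ∑ i, ∑ j, (C i j) ^ 2

open scoped Classical in
/-- Kaczmarz update for row `j`. -/
noncomputable def kacz {n : ℕ} (C : Matrix (Fin n) (Fin n) ℝ) (j : Fin n)
    (y : EuclideanSpace ℝ (Fin n)) : EuclideanSpace ℝ (Fin n) :=
  if row C j = 0 then y
  else y - ((⟪y, row C j⟫) / ‖row C j‖ ^ 2) • row C j

/-- Kaczmarz iteration along an index sequence `j : Fin k → Fin n`,
applying `T_{j 0}` first and `T_{j (k-1)}` last. -/
noncomputable def kaczIter {n : ℕ} (C : Matrix (Fin n) (Fin n) ℝ) :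
    (k : ℕ) → (Fin k → Fin n) → EuclideanSpace ℝ (Fin n) → EuclideanSpace ℝ (Fin n)
  | 0, _, y => y
  | (k + 1), j, y => kacz C (j (Fin.last k)) (kaczIter C k (fun i => j i.castSucc) y)



open MeasureTheory


open MeasureTheory Metric Set
open scoped Pointwise

namespace KaczAux

variable {n : ℕ}

/-- The map induced on the unit sphere by a linear isometry equivalence. -/
noncomputable def sphereMap (e : EuclideanSpace ℝ (Fin n) ≃ₗᵢ[ℝ] EuclideanSpace ℝ (Fin n))
    (x : sphere (0 : EuclideanSpace ℝ (Fin n)) 1) : sphere (0 : EuclideanSpace ℝ (Fin n)) 1 :=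
  ⟨e x, by
    rw [mem_sphere_zero_iff_norm, e.norm_map]
    exact mem_sphere_zero_iff_norm.mp x.2⟩

lemma continuous_sphereMap (e : EuclideanSpace ℝ (Fin n) ≃ₗᵢ[ℝ] EuclideanSpace ℝ (Fin n)) :
    Continuous (sphereMap e) :=
  Continuous.subtype_mk (e.continuous.comp continuous_subtype_val) _

lemma map_toSphere (e : EuclideanSpace ℝ (Fin n) ≃ₗᵢ[ℝ] EuclideanSpace ℝ (Fin n)) :
    Measure.map (sphereMap e) (volume : Measure (EuclideanSpace ℝ (Fin n))).toSphere
      = (volume : Measure (EuclideanSpace ℝ (Fin n))).toSphere := by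
  ext s hs
  rw [Measure.map_apply (continuous_sphereMap e).measurable hs,
    Measure.toSphere_apply' _ ((continuous_sphereMap e).measurable hs),
    Measure.toSphere_apply' _ hs]
  congr 1
  have h1 : (Subtype.val '' (sphereMap e ⁻¹' s) : Set (EuclideanSpace ℝ (Fin n)))
      = ⇑e ⁻¹' (Subtype.val '' s) := by
    ext v
    constructor
    · rintro ⟨y, hy, rfl⟩
      exact ⟨sphereMap e y, hy, rfl⟩
    · rintro ⟨z, hz, hez⟩
      have hv : v ∈ sphere (0 : EuclideanSpace ℝ (Fin n)) 1 := by
        rw [mem_sphere_zero_iff_norm, ← e.norm_map, ← hez]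
        exact mem_sphere_zero_iff_norm.mp z.2
      refine ⟨⟨v, hv⟩, ?_, rfl⟩
      have : sphereMap e ⟨v, hv⟩ = z := Subtype.ext hez.symm
      rw [Set.mem_preimage, this]; exact hz
  have h2 : Ioo (0:ℝ) 1 • (⇑e ⁻¹' (Subtype.val '' s))
      = ⇑e ⁻¹' (Ioo (0:ℝ) 1 • (Subtype.val '' s)) := by
    ext x
    constructor
    · rintro hx
      obtain ⟨r, hr, y, hy, rfl⟩ := Set.mem_smul.mp hx
      refine Set.mem_preimage.mpr (Set.mem_smul.mpr ⟨r, hr, e y, hy, ?_⟩)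
      rw [← e.map_smul]
    · intro hx
      obtain ⟨r, hr, y, hy, hxy⟩ := Set.mem_smul.mp (Set.mem_preimage.mp hx)
      refine Set.mem_smul.mpr ⟨r, hr, e.symm y, by simpa using hy, ?_⟩
      have : e (r • e.symm y) = e x := by rw [e.map_smul, e.apply_symm_apply, hxy]
      exact e.injective this
  rw [h1, h2,
    (e.measurePreserving).measure_preimage_emb e.toHomeomorph.measurableEmbedding]

/-- Normalized uniform measure on the unit sphere. -/
noncomputable def usphere (n : ℕ) : Measure (sphere (0 : EuclideanSpace ℝ (Fin n)) 1) :=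
  ((volume : Measure (EuclideanSpace ℝ (Fin n))).toSphere Set.univ)⁻¹ •
    (volume : Measure (EuclideanSpace ℝ (Fin n))).toSphere

lemma toSphere_univ_ne_zero (hn : 0 < n) :
    (volume : Measure (EuclideanSpace ℝ (Fin n))).toSphere Set.univ ≠ 0 := by
  haveI : Nonempty (Fin n) := ⟨⟨0, hn⟩⟩
  rw [Measure.toSphere_apply_univ]
  refine mul_ne_zero ?_ ?_
  · simp [finrank_euclideanSpace, hn.ne']
  · exact (measure_ball_pos volume 0 one_pos).ne'

lemma toSphere_univ_ne_top :
    (volume : Measure (EuclideanSpace ℝ (Fin n))).toSphere Set.univ ≠ ⊤ :=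
  (measure_lt_top _ _).ne

lemma isProbabilityMeasure_usphere (hn : 0 < n) : IsProbabilityMeasure (usphere n) := by
  constructor
  rw [usphere, Measure.smul_apply, smul_eq_mul,
    ENNReal.inv_mul_cancel (toSphere_univ_ne_zero hn) toSphere_univ_ne_top]

lemma map_usphere (e : EuclideanSpace ℝ (Fin n) ≃ₗᵢ[ℝ] EuclideanSpace ℝ (Fin n)) :
    Measure.map (sphereMap e) (usphere n) = usphere n := by
  rw [usphere, Measure.map_smul, map_toSphere]

lemma integrable_of_continuous (hn : 0 < n)
    {f : sphere (0 : EuclideanSpace ℝ (Fin n)) 1 → ℝ} (hf : Continuous f) :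
    Integrable f (usphere n) := by
  haveI := isProbabilityMeasure_usphere hn
  exact hf.integrable_of_hasCompactSupport (HasCompactSupport.of_compactSpace f)

lemma integral_inner_const (hn : 0 < n)
    (u v : EuclideanSpace ℝ (Fin n)) (hu : ‖u‖ = 1) (hv : ‖v‖ = 1) :
    ∫ x : sphere (0 : EuclideanSpace ℝ (Fin n)) 1,
        ⟪(x : EuclideanSpace ℝ (Fin n)), u⟫ ^ 2 ∂(usphere n)
    = ∫ x : sphere (0 : EuclideanSpace ℝ (Fin n)) 1,
        ⟪(x : EuclideanSpace ℝ (Fin n)), v⟫ ^ 2 ∂(usphere n) := by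
  set e : EuclideanSpace ℝ (Fin n) ≃ₗᵢ[ℝ] EuclideanSpace ℝ (Fin n) :=
    Submodule.reflection (ℝ ∙ (u - v))ᗮ with he
  have heu : e u = v := Submodule.reflection_sub (by rw [hu, hv])
  symm
  have hcont : Continuous fun x : sphere (0 : EuclideanSpace ℝ (Fin n)) 1 =>
      ⟪(x : EuclideanSpace ℝ (Fin n)), v⟫ ^ 2 :=
    (Continuous.inner continuous_subtype_val continuous_const).pow 2
  calc ∫ x : sphere (0 : EuclideanSpace ℝ (Fin n)) 1,
        ⟪(x : EuclideanSpace ℝ (Fin n)), v⟫ ^ 2 ∂(usphere n)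
      = ∫ x, ⟪(x : EuclideanSpace ℝ (Fin n)), v⟫ ^ 2
          ∂(Measure.map (sphereMap e) (usphere n)) := by rw [map_usphere]
    _ = ∫ x, ⟪(sphereMap e x : EuclideanSpace ℝ (Fin n)), v⟫ ^ 2 ∂(usphere n) :=
        integral_map (continuous_sphereMap e).aemeasurable hcont.aestronglyMeasurable
    _ = ∫ x, ⟪(x : EuclideanSpace ℝ (Fin n)), u⟫ ^ 2 ∂(usphere n) := by
        congr 1
        funext x
        have : ⟪(e (x : EuclideanSpace ℝ (Fin n))), v⟫
            = ⟪(x : EuclideanSpace ℝ (Fin n)), u⟫ := by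
          rw [← heu, e.inner_map_map]
        simp only [sphereMap, this]

lemma integral_inner_sq (hn : 0 < n)
    (u : EuclideanSpace ℝ (Fin n)) (hu : ‖u‖ = 1) :
    ∫ x : sphere (0 : EuclideanSpace ℝ (Fin n)) 1,
        ⟪(x : EuclideanSpace ℝ (Fin n)), u⟫ ^ 2 ∂(usphere n) = 1 / n := by
  haveI := isProbabilityMeasure_usphere hn
  set b : Fin n → EuclideanSpace ℝ (Fin n) := fun i => EuclideanSpace.single i (1:ℝ) with hb
  have hbnorm : ∀ i, ‖b i‖ = 1 := by intro i; simp [hb]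
  have hint : ∀ w : EuclideanSpace ℝ (Fin n), Integrable (fun x : sphere (0 : EuclideanSpace ℝ (Fin n)) 1 =>
      ⟪(x : EuclideanSpace ℝ (Fin n)), w⟫ ^ 2) (usphere n) :=
    fun w => integrable_of_continuous hn
      ((Continuous.inner continuous_subtype_val continuous_const).pow 2)
  have hsum : ∑ i, ∫ x : sphere (0 : EuclideanSpace ℝ (Fin n)) 1,
      ⟪(x : EuclideanSpace ℝ (Fin n)), b i⟫ ^ 2 ∂(usphere n) = 1 := by
    rw [← integral_finset_sum Finset.univ (fun i _ => hint (b i))]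
    have : ∀ x : sphere (0 : EuclideanSpace ℝ (Fin n)) 1,
        ∑ i, ⟪(x : EuclideanSpace ℝ (Fin n)), b i⟫ ^ 2 = 1 := by
      intro x
      have hx : ‖(x : EuclideanSpace ℝ (Fin n))‖ = 1 := mem_sphere_zero_iff_norm.mp x.2
      have : ∀ i, ⟪(x : EuclideanSpace ℝ (Fin n)), b i⟫ = (x : EuclideanSpace ℝ (Fin n)) i := by
        intro i
        simp [hb, EuclideanSpace.inner_single_right]
      simp only [this]
      have h2 : ∑ i, ((x : EuclideanSpace ℝ (Fin n)) i) ^ 2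
          = ⟪(x : EuclideanSpace ℝ (Fin n)), (x : EuclideanSpace ℝ (Fin n))⟫ := by
        rw [PiLp.inner_apply]
        simp [sq]
      rw [h2, real_inner_self_eq_norm_sq, hx, one_pow]
    simp only [this]
    simp
  have hconst : ∀ i : Fin n, ∫ x : sphere (0 : EuclideanSpace ℝ (Fin n)) 1,
      ⟪(x : EuclideanSpace ℝ (Fin n)), b i⟫ ^ 2 ∂(usphere n)
      = ∫ x : sphere (0 : EuclideanSpace ℝ (Fin n)) 1,
      ⟪(x : EuclideanSpace ℝ (Fin n)), u⟫ ^ 2 ∂(usphere n) := fun i =>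
    integral_inner_const hn (b i) u (hbnorm i) hu
  rw [Finset.sum_congr rfl (fun i _ => hconst i), Finset.sum_const, Finset.card_univ,
    Fintype.card_fin, nsmul_eq_mul] at hsum
  have hn' : (n:ℝ) ≠ 0 := Nat.cast_ne_zero.mpr hn.ne'
  rw [eq_div_iff hn']
  linear_combination hsum

end KaczAux


theorem main_theorem_second_part {n : ℕ} (hn : 0 < n)
    (C : Matrix (Fin n) (Fin n) ℝ) (hC : C ≠ 0)
    (ε : EuclideanSpace ℝ (Fin n)) (hε1 : ∀ i, ε i = -1 ∨ ε i = 1)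
    (hε : mulVecE C ε = 0)
    (ρ : ℝ) (hρ : 0 < ρ)
    (μ : Measure (EuclideanSpace ℝ (Fin n)))
    (hμ : μ = Measure.map
      (fun x : Metric.sphere (0 : EuclideanSpace ℝ (Fin n)) 1 => ρ • (x : EuclideanSpace ℝ (Fin n)))
      (((volume : Measure (EuclideanSpace ℝ (Fin n))).toSphere Set.univ)⁻¹ •
        (volume : Measure (EuclideanSpace ℝ (Fin n))).toSphere))
    (k : ℕ) (j : Fin k → Fin n) :
    (∫ y₀, ‖kaczIter C k j y₀‖ ^ 2 ∂μ) ≥ ρ ^ 2 / n := by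
  classical
  have hn' : (n : ℝ) ≠ 0 := Nat.cast_ne_zero.mpr hn.ne'
  have hnpos : (0 : ℝ) < n := Nat.cast_pos.mpr hn
  -- rows are orthogonal to ε
  have hrow : ∀ l : Fin n, ⟪row C l, ε⟫ = 0 := by
    intro l
    have h0 : C.mulVec ((WithLp.equiv 2 (Fin n → ℝ)) ε) = 0 := by
      have := congrArg (WithLp.equiv 2 (Fin n → ℝ)) hε
      simpa [mulVecE] using this
    have h1 := congrFun h0 l
    simp only [Matrix.mulVec, dotProduct, Pi.zero_apply] at h1
    rw [PiLp.inner_apply]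
    simpa [row, RCLike.inner_apply, mul_comm] using h1
  -- Kaczmarz step preserves the inner product with ε
  have hkacz : ∀ (l : Fin n) (z : EuclideanSpace ℝ (Fin n)), ⟪kacz C l z, ε⟫ = ⟪z, ε⟫ := by
    intro l z
    unfold kacz
    split
    · rfl
    · rw [inner_sub_left, real_inner_smul_left, hrow l, mul_zero, sub_zero]
  have hpres : ∀ (m : ℕ) (jj : Fin m → Fin n) (y : EuclideanSpace ℝ (Fin n)),
      ⟪kaczIter C m jj y, ε⟫ = ⟪y, ε⟫ := by
    intro m
    induction m with
    | zero => intro jj y; rfl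
    | succ m ih =>
      intro jj y
      show ⟪kacz C (jj (Fin.last m)) (kaczIter C m (fun i => jj i.castSucc) y), ε⟫ = _
      rw [hkacz, ih]
  -- continuity of the iteration
  have hkaczcont : ∀ l : Fin n, Continuous (kacz C l) := by
    intro l
    unfold kacz
    by_cases h : row C l = 0
    · simpa [h] using continuous_id'
    · simp only [if_neg h]
      have h1 : Continuous fun y : EuclideanSpace ℝ (Fin n) => ⟪y, row C l⟫ := Continuous.inner continuous_id continuous_const
      exact continuous_id.sub ((h1.div_const _).smul continuous_const)
  have hitercont : ∀ (m : ℕ) (jj : Fin m → Fin n), Continuous (kaczIter C m jj) := by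
    intro m
    induction m with
    | zero => intro jj; exact continuous_id
    | succ m ih =>
      intro jj
      show Continuous fun y => kacz C (jj (Fin.last m)) (kaczIter C m (fun i => jj i.castSucc) y)
      exact (hkaczcont _).comp (ih _)
  -- norm of ε
  have hεself : ⟪ε, ε⟫ = (n : ℝ) := by
    simp only [PiLp.inner_apply, RCLike.inner_apply, conj_trivial]
    have h1 : ∀ i ∈ Finset.univ, ε i * ε i = 1 := fun i _ => by
      rcases hε1 i with h | h <;> rw [h] <;> norm_num
    rw [Finset.sum_congr rfl h1, Finset.sum_const, Finset.card_univ, Fintype.card_fin,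
      nsmul_eq_mul, mul_one]
  have hεnorm : ‖ε‖ = Real.sqrt n := by
    rw [← Real.sqrt_sq (norm_nonneg ε), ← real_inner_self_eq_norm_sq, hεself]
  have hsn : (0:ℝ) < Real.sqrt n := Real.sqrt_pos.mpr hnpos
  set u : EuclideanSpace ℝ (Fin n) := (Real.sqrt n)⁻¹ • ε with hudef
  have hunorm : ‖u‖ = 1 := by
    rw [hudef, norm_smul, hεnorm, Real.norm_eq_abs, abs_of_pos (inv_pos.mpr hsn)]
    exact inv_mul_cancel₀ hsn.ne'
  have hinner : ∀ x : EuclideanSpace ℝ (Fin n), ⟪x, ε⟫ ^ 2 = n * ⟪x, u⟫ ^ 2 := by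
    intro x
    rw [hudef, real_inner_smul_right, mul_pow, inv_pow, Real.sq_sqrt (Nat.cast_nonneg n),
      ← mul_assoc, mul_inv_cancel₀ hn', one_mul]
  -- Cauchy-Schwarz lower bound for iterates
  have hbound : ∀ y : EuclideanSpace ℝ (Fin n),
      ⟪y, ε⟫ ^ 2 / n ≤ ‖kaczIter C k j y‖ ^ 2 := by
    intro y
    have hz := real_inner_mul_inner_self_le (kaczIter C k j y) ε
    rw [hpres k j y, real_inner_self_eq_norm_sq, hεself] at hz
    rw [div_le_iff₀ hnpos]
    calc ⟪y, ε⟫ ^ 2 = ⟪y, ε⟫ * ⟪y, ε⟫ := pow_two _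
      _ ≤ ‖kaczIter C k j y‖ ^ 2 * n := hz
  -- the measure
  haveI := KaczAux.isProbabilityMeasure_usphere (n := n) hn
  rw [hμ, show (((volume : Measure (EuclideanSpace ℝ (Fin n))).toSphere Set.univ)⁻¹ •
        (volume : Measure (EuclideanSpace ℝ (Fin n))).toSphere) = KaczAux.usphere n from rfl]
  have hφ : Continuous (fun x : Metric.sphere (0 : EuclideanSpace ℝ (Fin n)) 1 =>
      ρ • (x : EuclideanSpace ℝ (Fin n))) := continuous_subtype_val.const_smul ρ
  rw [integral_map (f := fun y => ‖kaczIter C k j y‖ ^ 2) hφ.aemeasurable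
      (((hitercont k j).norm.pow 2).aestronglyMeasurable),
    ge_iff_le]
  have hintg : Integrable (fun x : Metric.sphere (0 : EuclideanSpace ℝ (Fin n)) 1 =>
      ‖kaczIter C k j (ρ • (x : EuclideanSpace ℝ (Fin n)))‖ ^ 2) (KaczAux.usphere n) :=
    KaczAux.integrable_of_continuous hn (((hitercont k j).comp hφ).norm.pow 2)
  have hinth : Integrable (fun x : Metric.sphere (0 : EuclideanSpace ℝ (Fin n)) 1 =>
      ρ ^ 2 * ⟪(x : EuclideanSpace ℝ (Fin n)), u⟫ ^ 2) (KaczAux.usphere n) :=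
    (KaczAux.integrable_of_continuous hn
      ((Continuous.inner continuous_subtype_val continuous_const).pow 2)).const_mul _
  have hle : ∀ x : Metric.sphere (0 : EuclideanSpace ℝ (Fin n)) 1,
      ρ ^ 2 * ⟪(x : EuclideanSpace ℝ (Fin n)), u⟫ ^ 2
        ≤ ‖kaczIter C k j (ρ • (x : EuclideanSpace ℝ (Fin n)))‖ ^ 2 := by
    intro x
    have h1 := hbound (ρ • (x : EuclideanSpace ℝ (Fin n)))
    have h2 : ⟪ρ • (x : EuclideanSpace ℝ (Fin n)), ε⟫ ^ 2
        = ρ ^ 2 * ⟪(x : EuclideanSpace ℝ (Fin n)), ε⟫ ^ 2 := by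
      rw [real_inner_smul_left]; ring
    rw [h2, hinner] at h1
    calc ρ ^ 2 * ⟪(x : EuclideanSpace ℝ (Fin n)), u⟫ ^ 2
        = ρ ^ 2 * ((n : ℝ) * ⟪(x : EuclideanSpace ℝ (Fin n)), u⟫ ^ 2) / n := by
          field_simp
      _ ≤ _ := h1
  calc ρ ^ 2 / (n : ℝ)
      = ∫ x : Metric.sphere (0 : EuclideanSpace ℝ (Fin n)) 1,
          ρ ^ 2 * ⟪(x : EuclideanSpace ℝ (Fin n)), u⟫ ^ 2 ∂(KaczAux.usphere n) := by
        rw [integral_const_mul, KaczAux.integral_inner_sq hn u hunorm, mul_one_div]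
    _ ≤ _ := integral_mono hinth hintg hle
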